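/- For any positive integer r and functions f, g : ℝ → ℂ, the r-th iterate of the difference quotient satisfies the Leibniz rule δ_λ^r(fg) = Σ_{l=0}^{r} λ^{r-l} · C(r,l) · Σ_{k=0}^{l} C(l,k) · (δ_λ^{r-k} f)·(δ_λ^{k+r-l} g), where products are pointwise and C(n,m) denotes binomial coefficients. -/

import Mathlib

noncomputable def dq (l : ℝ) (f : ℝ → ℂ) : ℝ → ℂ := fun x => (f (x + l) - f x) / l

noncomputable def Lop (l : ℝ) (f : ℝ → ℂ) : ℝ → ℂ := fun x => f x + l * dq l f x

lemma dq_shift (l c : ℝ) (f : ℝ → ℂ) :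
    dq l (fun x => f (x + c)) = fun x => dq l f (x + c) := by
  funext x; simp only [dq]; ring_nf

lemma dq_iter_shift (l c : ℝ) (f : ℝ → ℂ) (n : ℕ) :
    (dq l)^[n] (fun x => f (x + c)) = fun x => (dq l)^[n] f (x + c) := by
  induction n generalizing f with
  | zero => rfl
  | succ n ih =>
    rw [Function.iterate_succ_apply, dq_shift, ih]
    funext x
    rw [← Function.iterate_succ_apply]

lemma shift_eq (l : ℝ) (hl : l ≠ 0) (f : ℝ → ℂ) (x : ℝ) :
    f (x + l) = f x + l * dq l f x := by
  have hlc : (l : ℂ) ≠ 0 := by exact_mod_cast hl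
  simp only [dq]
  field_simp
  ring

lemma dq_sum (l : ℝ) (s : Finset ℕ) (F : ℕ → ℝ → ℂ) (x : ℝ) :
    dq l (fun y => ∑ j ∈ s, F j y) x = ∑ j ∈ s, dq l (F j) x := by
  simp only [dq, Finset.sum_div, ← Finset.sum_sub_distrib]

lemma dq_const_mul (l : ℝ) (c : ℂ) (f : ℝ → ℂ) (x : ℝ) :
    dq l (fun y => c * f y) x = c * dq l f x := by
  simp only [dq]; ring

lemma dq_mul (l : ℝ) (u v : ℝ → ℂ) (x : ℝ) :
    dq l (fun y => u y * v y) x = dq l u x * v (x + l) + u x * dq l v x := by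
  simp only [dq]; ring

lemma pascal_sum (r : ℕ) (F : ℕ → ℂ) :
    ∑ j ∈ Finset.range (r + 1), (r.choose j : ℂ) * (F (j + 1) + F j)
      = ∑ j ∈ Finset.range (r + 2), ((r + 1).choose j : ℂ) * F j := by
  rw [Finset.sum_range_succ' (fun j => (((r + 1).choose j : ℂ)) * F j) (r + 1)]
  simp only [Nat.choose_succ_succ, Nat.cast_add, Nat.choose_zero_right, Nat.cast_one, one_mul,
    mul_add, add_mul, Finset.sum_add_distrib]
  have h1 : ∑ j ∈ Finset.range (r + 1), ((r.choose (j + 1) : ℂ)) * F (j + 1)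
      = ∑ j ∈ Finset.range (r + 1), ((r.choose j : ℂ)) * F j - F 0 := by
    rw [Finset.sum_range_succ' (fun j => ((r.choose j : ℂ)) * F j) r]
    rw [Finset.sum_range_succ]
    simp [Nat.choose_succ_self]
  rw [h1]
  ring

/-- Step 1: Leibniz rule with shifted arguments. -/
lemma leib (l : ℝ) (f g : ℝ → ℂ) (r : ℕ) :
    (dq l)^[r] (fun x => f x * g x) =
      fun x => ∑ j ∈ Finset.range (r + 1),
        (r.choose j : ℂ) * ((dq l)^[j] f x * (dq l)^[r - j] g (x + j * l)) := by
  induction r with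
  | zero => funext x; simp
  | succ r ih =>
    rw [Function.iterate_succ_apply', ih]
    funext x
    rw [dq_sum]
    have step : ∀ j ∈ Finset.range (r + 1),
        dq l (fun y => (r.choose j : ℂ) * ((dq l)^[j] f y * (dq l)^[r - j] g (y + j * l))) x
          = (r.choose j : ℂ) *
            ((dq l)^[j + 1] f x * (dq l)^[r + 1 - (j + 1)] g (x + (j + 1 : ℕ) * l)
              + (dq l)^[j] f x * (dq l)^[r + 1 - j] g (x + j * l)) := by
      intro j hj
      have hjr : j ≤ r := Nat.lt_succ_iff.mp (Finset.mem_range.mp hj)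
      rw [dq_const_mul, dq_mul]
      have e1 : (dq l) (fun y => (dq l)^[r - j] g (y + j * l)) x
          = (dq l)^[r + 1 - j] g (x + j * l) := by
        rw [dq_shift]
        have h2 : r + 1 - j = (r - j) + 1 := by omega
        rw [h2, Function.iterate_succ_apply']
      have e2 : (dq l)^[r - j] g (x + l + j * l)
          = (dq l)^[r + 1 - (j + 1)] g (x + (j + 1 : ℕ) * l) := by
        have h3 : r + 1 - (j + 1) = r - j := by omega
        rw [h3]
        norm_num
        ring_nf
      rw [e1, e2, ← Function.iterate_succ_apply' (dq l) j f]
    rw [Finset.sum_congr rfl step]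
    exact pascal_sum r (fun j => (dq l)^[j] f x * (dq l)^[r + 1 - j] g (x + j * l))

/-- Step 2: expansion of a shift as powers of dq. -/
lemma shift_expand (l : ℝ) (hl : l ≠ 0) (h : ℝ → ℂ) (n : ℕ) (x : ℝ) :
    h (x + n * l) = ∑ m ∈ Finset.range (n + 1),
      (n.choose m : ℂ) * ((l : ℂ) ^ m * (dq l)^[m] h x) := by
  induction n generalizing x with
  | zero => simp
  | succ n ih =>
    have hx : (x : ℝ) + (n + 1 : ℕ) * l = (x + l) + n * l := by push_cast; ring
    rw [hx, ih]
    have term : ∀ m ∈ Finset.range (n + 1),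
        (n.choose m : ℂ) * ((l : ℂ) ^ m * (dq l)^[m] h (x + l))
          = (n.choose m : ℂ) * (((l:ℂ) ^ (m+1) * (dq l)^[m+1] h x)
              + ((l:ℂ) ^ m * (dq l)^[m] h x)) := by
      intro m _
      rw [shift_eq l hl ((dq l)^[m] h) x, ← Function.iterate_succ_apply' (dq l) m h]
      push_cast
      ring
    rw [Finset.sum_congr rfl term]
    exact pascal_sum n (fun m => (l : ℂ) ^ m * (dq l)^[m] h x)

lemma coeff_id (r j m : ℕ) (hj : j ≤ r) (hm : m ≤ r) :
    r.choose (r - m) * (r - m).choose (r - j) = r.choose j * j.choose m := by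
  rcases le_or_gt m j with hmj | hjm
  · rw [Nat.choose_symm hm]
    have h2 : (r - m).choose (r - j) = (r - m).choose (j - m) := by
      have : r - j = (r - m) - (j - m) := by omega
      rw [this, Nat.choose_symm (by omega)]
    rw [h2, ← Nat.choose_mul (n := r) hmj]
  · rw [Nat.choose_eq_zero_of_lt hjm,
      Nat.choose_eq_zero_of_lt (show r - m < r - j by omega), mul_zero, mul_zero]

theorem stmt3 (l : ℝ) (hl : l ≠ 0) (r : ℕ) (hr : 0 < r) (f g : ℝ → ℂ) :
    (dq l)^[r] (fun x => f x * g x) =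
      fun x => ∑ i ∈ Finset.range (r + 1), (l : ℂ) ^ (r - i) * (r.choose i : ℂ) *
        ∑ k ∈ Finset.range (i + 1), (i.choose k : ℂ) *
          ((dq l)^[r - k] f x * (dq l)^[k + r - i] g x) := by
  rw [leib l f g r]
  funext x
  have expand : ∀ j ∈ Finset.range (r + 1),
      (r.choose j : ℂ) * ((dq l)^[j] f x * (dq l)^[r - j] g (x + j * l))
        = ∑ m ∈ Finset.range (r + 1),
            (r.choose j : ℂ) * (j.choose m : ℂ) * (l : ℂ) ^ m *
              ((dq l)^[j] f x * (dq l)^[m + r - j] g x) := by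
    intro j hj
    have hjr : j ≤ r := Nat.lt_succ_iff.mp (Finset.mem_range.mp hj)
    rw [shift_expand l hl ((dq l)^[r - j] g) j x, Finset.mul_sum, Finset.mul_sum]
    have step1 : ∀ m ∈ Finset.range (j + 1),
        (r.choose j : ℂ) * ((dq l)^[j] f x *
            ((j.choose m : ℂ) * ((l : ℂ) ^ m * (dq l)^[m] ((dq l)^[r - j] g) x)))
          = (r.choose j : ℂ) * (j.choose m : ℂ) * (l : ℂ) ^ m *
              ((dq l)^[j] f x * (dq l)^[m + r - j] g x) := by
      intro m _
      have hit : (dq l)^[m] ((dq l)^[r - j] g) x = (dq l)^[m + r - j] g x := by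
        have hn : m + r - j = m + (r - j) := by omega
        rw [hn, Function.iterate_add_apply]
      rw [hit]; ring
    rw [Finset.sum_congr rfl step1]
    refine Finset.sum_subset ?_ ?_
    · exact Finset.range_subset_range.mpr (by omega)
    intro m hm hnm
    simp only [Finset.mem_range] at hm hnm
    rw [Nat.choose_eq_zero_of_lt (show j < m by omega)]
    simp
  rw [Finset.sum_congr rfl expand]
  have expandR : ∀ i ∈ Finset.range (r + 1),
      (l : ℂ) ^ (r - i) * (r.choose i : ℂ) *
          ∑ k ∈ Finset.range (i + 1), (i.choose k : ℂ) *
            ((dq l)^[r - k] f x * (dq l)^[k + r - i] g x)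
        = ∑ k ∈ Finset.range (r + 1), (l : ℂ) ^ (r - i) * (r.choose i : ℂ) * ((i.choose k : ℂ) *
            ((dq l)^[r - k] f x * (dq l)^[k + r - i] g x)) := by
    intro i hi
    have hir : i ≤ r := Nat.lt_succ_iff.mp (Finset.mem_range.mp hi)
    rw [Finset.mul_sum]
    refine Finset.sum_subset ?_ ?_
    · exact Finset.range_subset_range.mpr (by omega)
    intro k hk hnk
    simp only [Finset.mem_range] at hk hnk
    rw [Nat.choose_eq_zero_of_lt (show i < k by omega)]
    simp
  rw [Finset.sum_congr rfl expandR]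
  conv_rhs => rw [Finset.sum_comm]
  conv_rhs => rw [← Finset.sum_range_reflect (fun k => ∑ i ∈ Finset.range (r + 1),
      (l : ℂ) ^ (r - i) * (r.choose i : ℂ) * ((i.choose k : ℂ) *
        ((dq l)^[r - k] f x * (dq l)^[k + r - i] g x))) (r + 1)]
  refine Finset.sum_congr rfl fun j hj => ?_
  have hjr : j ≤ r := Nat.lt_succ_iff.mp (Finset.mem_range.mp hj)
  simp only [Nat.add_sub_cancel]
  conv_rhs => rw [← Finset.sum_range_reflect (fun i =>
      (l : ℂ) ^ (r - i) * (r.choose i : ℂ) * ((i.choose (r - j) : ℂ) *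
        ((dq l)^[r - (r - j)] f x * (dq l)^[(r - j) + r - i] g x))) (r + 1)]
  refine Finset.sum_congr rfl fun m hm => ?_
  have hmr : m ≤ r := Nat.lt_succ_iff.mp (Finset.mem_range.mp hm)
  simp only [Nat.add_sub_cancel]
  have e2 : r - (r - m) = m := by omega
  have e3 : r - (r - j) = j := by omega
  have e4 : (r - j) + r - (r - m) = m + r - j := by omega
  rw [e2, e3, e4]
  have hc : ((r.choose (r - m) : ℂ)) * ((r - m).choose (r - j) : ℂ)
      = (r.choose j : ℂ) * (j.choose m : ℂ) := by
    exact_mod_cast congrArg (Nat.cast (R := ℂ)) (coeff_id r j m hjr hmr)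
  linear_combination (-((l : ℂ) ^ m * ((dq l)^[j] f x * (dq l)^[m + r - j] g x))) * hc
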